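/- For every bounded linear operator A on a complex Hilbert space, w²(A) ≥ (1/4)‖A*A + AA*‖ + (1/4)c²(Re(A) + Im(A)) + (1/4)c²(Re(A) − Im(A)) + (1/4)| ‖Re(A) + Im(A)‖² − ‖Re(A) − Im(A)‖² + c²(Re(A) − Im(A)) − c²(Re(A) + Im(A)) |. -/

import Mathlib

open scoped InnerProductSpace
open ContinuousLinearMap

/-- The numerical radius of a bounded linear operator. -/
noncomputable def numRadius {H : Type*} [NormedAddCommGroup H] [InnerProductSpace ℂ H]
    (A : H →L[ℂ] H) : ℝ :=
  sSup {r : ℝ | ∃ x : H, ‖x‖ = 1 ∧ r = ‖⟪A x, x⟫_ℂ‖}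

/-- The Crawford number of a bounded linear operator. -/
noncomputable def crawford {H : Type*} [NormedAddCommGroup H] [InnerProductSpace ℂ H]
    (A : H →L[ℂ] H) : ℝ :=
  sInf {r : ℝ | ∃ x : H, ‖x‖ = 1 ∧ r = ‖⟪A x, x⟫_ℂ‖}

/-- The real part of a bounded linear operator. -/
noncomputable def reP {H : Type*} [NormedAddCommGroup H] [InnerProductSpace ℂ H]
    [CompleteSpace H] (A : H →L[ℂ] H) : H →L[ℂ] H :=
  ((2 : ℂ)⁻¹) • (A + adjoint A)

/-- The imaginary part of a bounded linear operator. -/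
noncomputable def imP {H : Type*} [NormedAddCommGroup H] [InnerProductSpace ℂ H]
    [CompleteSpace H] (A : H →L[ℂ] H) : H →L[ℂ] H :=
  ((2 * Complex.I)⁻¹) • (A - adjoint A)

section Aux
variable {H : Type*} [NormedAddCommGroup H] [InnerProductSpace ℂ H]

lemma sa_norm_le [CompleteSpace H] {B : H →L[ℂ] H} (hB : IsSelfAdjoint B) {M : ℝ}
    (hM : 0 ≤ M) (h : ∀ x : H, ‖x‖ = 1 → ‖⟪B x, x⟫_ℂ‖ ≤ M) : ‖B‖ ≤ M := by
  have h' : ∀ x : H, ‖⟪B x, x⟫_ℂ‖ ≤ M * ‖x‖ ^ 2 := by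
    intro x
    by_cases hx : x = 0
    · simp [hx]
    · have hxp : (0:ℝ) < ‖x‖ := norm_pos_iff.mpr hx
      have h1 : ‖((‖x‖⁻¹ : ℝ) : ℂ) • x‖ = 1 := by
        rw [norm_smul]
        simp [abs_of_nonneg (inv_nonneg.mpr (norm_nonneg x)), inv_mul_cancel₀ hxp.ne']
      have h2 := h _ h1
      rw [map_smul, inner_smul_left, inner_smul_right, norm_mul, norm_mul,
        RingHomIsometric.norm_map] at h2
      simp only [Complex.norm_real, Real.norm_eq_abs,
        abs_of_nonneg (inv_nonneg.mpr (norm_nonneg x))] at h2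
      have : ‖x‖⁻¹ * (‖x‖⁻¹ * ‖⟪B x, x⟫_ℂ‖) ≤ M := h2
      calc ‖⟪B x, x⟫_ℂ‖ = ‖x‖^2 * (‖x‖⁻¹ * (‖x‖⁻¹ * ‖⟪B x, x⟫_ℂ‖)) := by
            field_simp
        _ ≤ ‖x‖^2 * M := mul_le_mul_of_nonneg_left this (by positivity)
        _ = M * ‖x‖^2 := by ring
  have hre : ∀ x y : H, (⟪B x, y⟫_ℂ).re ≤ (M/2) * (‖x‖^2 + ‖y‖^2) := by
    intro x y
    have e0 : ⟪x, B y⟫_ℂ = ⟪B x, y⟫_ℂ := by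
      nth_rewrite 1 [← hB.adjoint_eq]
      exact adjoint_inner_right B x y
    have e2 : ⟪B y, x⟫_ℂ = (starRingEnd ℂ) ⟪B x, y⟫_ℂ := by
      rw [← inner_conj_symm, e0]
    have e1 : ⟪B (x+y), x+y⟫_ℂ - ⟪B (x-y), x-y⟫_ℂ
        = 2 * (⟪B x, y⟫_ℂ + (starRingEnd ℂ) ⟪B x, y⟫_ℂ) := by
      rw [← e2]
      simp only [map_add, map_sub, inner_add_left, inner_add_right, inner_sub_left,
        inner_sub_right]
      ring
    have e3 : (⟪B (x+y), x+y⟫_ℂ - ⟪B (x-y), x-y⟫_ℂ).re = 4 * (⟪B x, y⟫_ℂ).re := by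
      rw [e1, Complex.add_conj]
      simp; ring
    have b1 : (⟪B (x+y), x+y⟫_ℂ).re ≤ M * ‖x+y‖^2 :=
      (Complex.re_le_norm _).trans (h' _)
    have b2 : -(⟪B (x-y), x-y⟫_ℂ).re ≤ M * ‖x-y‖^2 := by
      calc -(⟪B (x-y), x-y⟫_ℂ).re = ((- ⟪B (x-y), x-y⟫_ℂ)).re := by simp
        _ ≤ ‖- ⟪B (x-y), x-y⟫_ℂ‖ := Complex.re_le_norm _
        _ = ‖⟪B (x-y), x-y⟫_ℂ‖ := norm_neg _
        _ ≤ M * ‖x-y‖^2 := h' _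
    have e5 : ‖x+y‖^2 + ‖x-y‖^2 = 2 * (‖x‖^2 + ‖y‖^2) := by
      simpa [pow_two] using parallelogram_law_with_norm ℂ x y
    have e4 : 4 * (⟪B x, y⟫_ℂ).re ≤ M * ‖x+y‖^2 + M * ‖x-y‖^2 := by
      rw [← e3, Complex.sub_re]; linarith
    nlinarith [e4, e5]
  refine B.opNorm_le_bound hM fun x => ?_
  by_cases hBx : B x = 0
  · simp [hBx]; positivity
  · have hBxn : (0:ℝ) < ‖B x‖ := norm_pos_iff.mpr hBx
    have hx : x ≠ 0 := fun hx => hBx (by simp [hx])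
    have hxp : (0:ℝ) < ‖x‖ := norm_pos_iff.mpr hx
    set y : H := ((‖x‖ / ‖B x‖ : ℝ) : ℂ) • (B x) with hy
    have hyn : ‖y‖ = ‖x‖ := by
      rw [hy, norm_smul, Complex.norm_real, Real.norm_eq_abs,
        abs_of_nonneg (div_nonneg (norm_nonneg x) (norm_nonneg (B x)))]
      field_simp
    have hinner : (⟪B x, y⟫_ℂ).re = ‖x‖ * ‖B x‖ := by
      rw [hy, inner_smul_right, inner_self_eq_norm_sq_to_K]
      norm_cast
      simp [Complex.mul_re]
      norm_cast
      field_simp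
    have hb := hre x y
    rw [hinner, hyn] at hb
    have : ‖x‖ * ‖B x‖ ≤ M * ‖x‖ * ‖x‖ := by nlinarith
    calc ‖B x‖ = (‖x‖ * ‖B x‖) / ‖x‖ := by field_simp
      _ ≤ (M * ‖x‖ * ‖x‖) / ‖x‖ := by gcongr
      _ = M * ‖x‖ := by field_simp

end Aux

section Aux2
variable {H : Type*} [NormedAddCommGroup H] [InnerProductSpace ℂ H]

lemma exists_unit [Nontrivial H] : ∃ x : H, ‖x‖ = 1 := by
  obtain ⟨v, hv⟩ := exists_ne (0 : H)
  have hvn : (0:ℝ) < ‖v‖ := norm_pos_iff.mpr hv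
  refine ⟨((‖v‖⁻¹ : ℝ) : ℂ) • v, ?_⟩
  rw [norm_smul, Complex.norm_real, Real.norm_eq_abs,
    abs_of_nonneg (inv_nonneg.mpr (norm_nonneg v)), inv_mul_cancel₀ hvn.ne']

lemma bddAbove_S (T : H →L[ℂ] H) :
    BddAbove {r : ℝ | ∃ x : H, ‖x‖ = 1 ∧ r = ‖⟪T x, x⟫_ℂ‖} := by
  refine ⟨‖T‖, fun r hr => ?_⟩
  obtain ⟨x, hx, rfl⟩ := hr
  calc ‖⟪T x, x⟫_ℂ‖ ≤ ‖T x‖ * ‖x‖ := norm_inner_le_norm _ _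
    _ ≤ ‖T‖ * ‖x‖ * ‖x‖ := by gcongr; exact T.le_opNorm x
    _ = ‖T‖ := by rw [hx]; ring

lemma le_numRadius (T : H →L[ℂ] H) {x : H} (hx : ‖x‖ = 1) :
    ‖⟪T x, x⟫_ℂ‖ ≤ numRadius T :=
  le_csSup (bddAbove_S T) ⟨x, hx, rfl⟩

lemma numRadius_nonneg [Nontrivial H] (T : H →L[ℂ] H) : 0 ≤ numRadius T := by
  obtain ⟨x, hx⟩ := exists_unit (H := H)
  exact (norm_nonneg _).trans (le_numRadius T hx)

lemma crawford_le (T : H →L[ℂ] H) {x : H} (hx : ‖x‖ = 1) :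
    crawford T ≤ ‖⟪T x, x⟫_ℂ‖ :=
  csInf_le ⟨0, fun r hr => by obtain ⟨y, _, rfl⟩ := hr; exact norm_nonneg _⟩ ⟨x, hx, rfl⟩

lemma crawford_nonneg [Nontrivial H] (T : H →L[ℂ] H) : 0 ≤ crawford T := by
  obtain ⟨x, hx⟩ := exists_unit (H := H)
  exact le_csInf ⟨_, x, hx, rfl⟩ fun r hr => by obtain ⟨y, _, rfl⟩ := hr; exact norm_nonneg _

variable [CompleteSpace H]

lemma sa_reP (A : H →L[ℂ] H) : IsSelfAdjoint (reP A) := by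
  rw [IsSelfAdjoint, reP, star_smul, star_add, star_eq_adjoint, star_eq_adjoint,
    adjoint_adjoint, add_comm]
  norm_num

lemma sa_imP (A : H →L[ℂ] H) : IsSelfAdjoint (imP A) := by
  rw [IsSelfAdjoint, imP, star_smul, star_sub, star_eq_adjoint, star_eq_adjoint,
    adjoint_adjoint]
  rw [show (star ((2:ℂ) * Complex.I)⁻¹) = -((2:ℂ) * Complex.I)⁻¹ by
    simp [Complex.ext_iff]]
  rw [neg_smul, ← smul_neg, neg_sub]

lemma sa_B (A : H →L[ℂ] H) : IsSelfAdjoint (reP A + imP A) := (sa_reP A).add (sa_imP A)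

lemma sa_C (A : H →L[ℂ] H) : IsSelfAdjoint (reP A - imP A) := (sa_reP A).sub (sa_imP A)

lemma sq_expand (α β : ℂ) (a b : H →L[ℂ] H) :
    (α • a + β • b) * (α • a + β • b) + (β • a + α • b) * (β • a + α • b)
      = (α^2 + β^2) • (a*a) + (2*(α*β)) • (a*b) + (2*(α*β)) • (b*a)
        + (α^2 + β^2) • (b*b) := by
  simp only [add_mul, mul_add, smul_mul_smul_comm]
  module

lemma sq_sum (A : H →L[ℂ] H) :
    (reP A + imP A) * (reP A + imP A) + (reP A - imP A) * (reP A - imP A)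
      = adjoint A * A + A * adjoint A := by
  have h1 : reP A + imP A
      = ((2:ℂ)⁻¹ + (2*Complex.I)⁻¹) • A + ((2:ℂ)⁻¹ - (2*Complex.I)⁻¹) • adjoint A := by
    rw [reP, imP]; module
  have h2 : reP A - imP A
      = ((2:ℂ)⁻¹ - (2*Complex.I)⁻¹) • A + ((2:ℂ)⁻¹ + (2*Complex.I)⁻¹) • adjoint A := by
    rw [reP, imP]; module
  have hc1 : ((2:ℂ)⁻¹ + (2*Complex.I)⁻¹)^2 + ((2:ℂ)⁻¹ - (2*Complex.I)⁻¹)^2 = 0 := by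
    have h2I : (2:ℂ) * Complex.I ≠ 0 := by simp [Complex.I_ne_zero]
    field_simp
    ring_nf
    simp [Complex.I_sq]
  have hc2 : 2*(((2:ℂ)⁻¹ + (2*Complex.I)⁻¹) * ((2:ℂ)⁻¹ - (2*Complex.I)⁻¹)) = 1 := by
    have h2I : (2:ℂ) * Complex.I ≠ 0 := by simp [Complex.I_ne_zero]
    field_simp
    ring_nf
    simp [Complex.I_sq]
    ring
  rw [h1, h2, sq_expand, hc1, hc2]
  simp [add_comm]

lemma norm_sq_of_sa {B : H →L[ℂ] H} (hB : IsSelfAdjoint B) : ‖B * B‖ = ‖B‖^2 := by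
  have h := ContinuousLinearMap.norm_adjoint_comp_self B
  rw [hB.adjoint_eq] at h
  rw [show B * B = B ∘L B from rfl, h]
  ring

lemma cx1 (z : ℂ) :
    (starRingEnd ℂ) (2:ℂ)⁻¹ * (z + (starRingEnd ℂ) z)
      + (starRingEnd ℂ) ((2:ℂ) * Complex.I)⁻¹ * (z - (starRingEnd ℂ) z)
      = ((z.re - z.im : ℝ) : ℂ) := by
  simp [Complex.ext_iff, Complex.div_re, Complex.div_im, Complex.normSq]
  norm_num
  ring

lemma cx2 (z : ℂ) :
    (starRingEnd ℂ) (2:ℂ)⁻¹ * (z + (starRingEnd ℂ) z)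
      - (starRingEnd ℂ) ((2:ℂ) * Complex.I)⁻¹ * (z - (starRingEnd ℂ) z)
      = ((z.re + z.im : ℝ) : ℂ) := by
  simp [Complex.ext_iff, Complex.div_re, Complex.div_im, Complex.normSq]
  norm_num
  ring

lemma inner_B (A : H →L[ℂ] H) (x : H) :
    ⟪(reP A + imP A) x, x⟫_ℂ = ((((⟪A x, x⟫_ℂ).re - (⟪A x, x⟫_ℂ).im : ℝ)) : ℂ) := by
  have hz : ⟪adjoint A x, x⟫_ℂ = (starRingEnd ℂ) ⟪A x, x⟫_ℂ := by
    rw [adjoint_inner_left, ← inner_conj_symm]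
  simp only [reP, imP, ContinuousLinearMap.add_apply, ContinuousLinearMap.sub_apply,
    ContinuousLinearMap.smul_apply, inner_add_left, inner_sub_left, inner_smul_left, hz]
  rw [← cx1 ⟪A x, x⟫_ℂ]

lemma inner_C (A : H →L[ℂ] H) (x : H) :
    ⟪(reP A - imP A) x, x⟫_ℂ = ((((⟪A x, x⟫_ℂ).re + (⟪A x, x⟫_ℂ).im : ℝ)) : ℂ) := by
  have hz : ⟪adjoint A x, x⟫_ℂ = (starRingEnd ℂ) ⟪A x, x⟫_ℂ := by
    rw [adjoint_inner_left, ← inner_conj_symm]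
  simp only [reP, imP, ContinuousLinearMap.add_apply, ContinuousLinearMap.sub_apply,
    ContinuousLinearMap.smul_apply, inner_add_left, inner_sub_left, inner_smul_left, hz]
  rw [← cx2 ⟪A x, x⟫_ℂ]

lemma key_sum (A : H →L[ℂ] H) (x : H) :
    ‖⟪(reP A + imP A) x, x⟫_ℂ‖^2 + ‖⟪(reP A - imP A) x, x⟫_ℂ‖^2
      = 2 * ‖⟪A x, x⟫_ℂ‖^2 := by
  rw [inner_B, inner_C]
  set z := ⟪A x, x⟫_ℂ
  rw [Complex.norm_real, Complex.norm_real, Real.norm_eq_abs, Real.norm_eq_abs,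
    sq_abs, sq_abs]
  have : ‖z‖^2 = z.re^2 + z.im^2 := by
    rw [Complex.sq_norm, Complex.normSq_apply]; ring
  rw [this]; ring

end Aux2

theorem stmt4 {H : Type*} [NormedAddCommGroup H] [InnerProductSpace ℂ H]
    [CompleteSpace H] [Nontrivial H] (A : H →L[ℂ] H) :
    (1/4 : ℝ) * ‖adjoint A * A + A * adjoint A‖ +
      (1/4 : ℝ) * crawford (reP A + imP A) ^ 2 +
      (1/4 : ℝ) * crawford (reP A - imP A) ^ 2 +
      (1/4 : ℝ) * |‖reP A + imP A‖ ^ 2 - ‖reP A - imP A‖ ^ 2 +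
        crawford (reP A - imP A) ^ 2 - crawford (reP A + imP A) ^ 2| ≤
      numRadius A ^ 2 := by
  obtain ⟨x₀, hx₀⟩ := exists_unit (H := H)
  have hw0 : 0 ≤ numRadius A := numRadius_nonneg A
  have hcb := crawford_nonneg (reP A + imP A)
  have hcc := crawford_nonneg (reP A - imP A)
  -- pointwise bound for B
  have hBpt : ∀ x : H, ‖x‖ = 1 →
      ‖⟪(reP A + imP A) x, x⟫_ℂ‖^2 ≤ 2 * numRadius A ^ 2 - crawford (reP A - imP A) ^ 2 := by
    intro x hx
    have h1 := key_sum A x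
    have h2 : crawford (reP A - imP A) ^ 2 ≤ ‖⟪(reP A - imP A) x, x⟫_ℂ‖ ^ 2 := by
      have := crawford_le (reP A - imP A) hx
      nlinarith [crawford_nonneg (reP A - imP A)]
    have h3 : ‖⟪A x, x⟫_ℂ‖ ≤ numRadius A := le_numRadius A hx
    nlinarith [norm_nonneg (⟪A x, x⟫_ℂ)]
  have hCpt : ∀ x : H, ‖x‖ = 1 →
      ‖⟪(reP A - imP A) x, x⟫_ℂ‖^2 ≤ 2 * numRadius A ^ 2 - crawford (reP A + imP A) ^ 2 := by
    intro x hx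
    have h1 := key_sum A x
    have h2 : crawford (reP A + imP A) ^ 2 ≤ ‖⟪(reP A + imP A) x, x⟫_ℂ‖ ^ 2 := by
      have := crawford_le (reP A + imP A) hx
      nlinarith [crawford_nonneg (reP A + imP A)]
    have h3 : ‖⟪A x, x⟫_ℂ‖ ≤ numRadius A := le_numRadius A hx
    nlinarith [norm_nonneg (⟪A x, x⟫_ℂ)]
  have sq_bound : ∀ (T : H →L[ℂ] H), IsSelfAdjoint T → ∀ t : ℝ,
      (∀ x : H, ‖x‖ = 1 → ‖⟪T x, x⟫_ℂ‖^2 ≤ t) → ‖T‖^2 ≤ t := by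
    intro T hT t ht
    have ht0 : 0 ≤ t := le_trans (by positivity) (ht x₀ hx₀)
    have hle : ‖T‖ ≤ Real.sqrt t := by
      apply sa_norm_le hT (Real.sqrt_nonneg t)
      intro x hx
      have := ht x hx
      nlinarith [Real.sq_sqrt ht0, Real.sqrt_nonneg t, norm_nonneg (⟪T x, x⟫_ℂ)]
    nlinarith [Real.sq_sqrt ht0, norm_nonneg T]
  have hB2 : ‖reP A + imP A‖^2 ≤ 2 * numRadius A ^ 2 - crawford (reP A - imP A) ^ 2 :=
    sq_bound _ (sa_B A) _ hBpt
  have hC2 : ‖reP A - imP A‖^2 ≤ 2 * numRadius A ^ 2 - crawford (reP A + imP A) ^ 2 :=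
    sq_bound _ (sa_C A) _ hCpt
  have hsum : ‖adjoint A * A + A * adjoint A‖
      ≤ ‖reP A + imP A‖^2 + ‖reP A - imP A‖^2 := by
    rw [← sq_sum A, ← norm_sq_of_sa (sa_B A), ← norm_sq_of_sa (sa_C A)]
    exact norm_add_le _ _
  rcases abs_cases (‖reP A + imP A‖ ^ 2 - ‖reP A - imP A‖ ^ 2 +
      crawford (reP A - imP A) ^ 2 - crawford (reP A + imP A) ^ 2) with ⟨h, _⟩ | ⟨h, _⟩ <;>
    rw [h] <;> linarith
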